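/- Probability bound for conditionally typical sets under an independent draw: with the setup above, if a ∈ 𝒜ⁿ is δ1-typical for p_A and B = (B_1,...,B_n) is drawn i.i.d. from the marginal p_B, then P[(a, B) is δ2-jointly typical] ≤ 2^{-n(I(A;B) - 2δ2 H(B))}. -/

import Mathlib

open Finset Real
open scoped BigOperators Classical

/-- `-x log₂ x`, with the convention that it is `0` at `x = 0`. -/
noncomputable def negMulLog2 (x : ℝ) : ℝ := -x * Real.logb 2 x

/-- Binary entropy function `h(p) = -p log₂ p - (1-p) log₂ (1-p)`. -/
noncomputable def binEnt (p : ℝ) : ℝ := negMulLog2 p + negMulLog2 (1 - p)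

/-- `μ` is a probability mass function on the finite type `Ω`. -/
def IsPMF {Ω : Type*} [Fintype Ω] (μ : Ω → ℝ) : Prop :=
  (∀ ω, 0 ≤ μ ω) ∧ ∑ ω, μ ω = 1

/-- Probability that the random variable `X` takes the value `a`. -/
noncomputable def prob {Ω : Type*} [Fintype Ω] (μ : Ω → ℝ) {A : Type*} (X : Ω → A) (a : A) : ℝ :=
  ∑ ω, if X ω = a then μ ω else 0

/-- Probability of an event. -/
noncomputable def prEvent {Ω : Type*} [Fintype Ω] (μ : Ω → ℝ) (E : Ω → Prop) : ℝ :=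
  ∑ ω, if E ω then μ ω else 0

/-- Shannon entropy (in bits) of a random variable. -/
noncomputable def entropy {Ω : Type*} [Fintype Ω] (μ : Ω → ℝ) {A : Type*} [Fintype A]
    (X : Ω → A) : ℝ :=
  ∑ a, negMulLog2 (prob μ X a)

/-- Conditional entropy `H(X|Y) = H(X,Y) - H(Y)` (in bits). -/
noncomputable def condEntropy {Ω : Type*} [Fintype Ω] (μ : Ω → ℝ) {A B : Type*}
    [Fintype A] [Fintype B] (X : Ω → A) (Y : Ω → B) : ℝ :=
  entropy μ (fun ω => (X ω, Y ω)) - entropy μ Y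

/-- Mutual information `I(X;Y) = H(X) + H(Y) - H(X,Y)` (in bits). -/
noncomputable def mutualInfo {Ω : Type*} [Fintype Ω] (μ : Ω → ℝ) {A B : Type*}
    [Fintype A] [Fintype B] (X : Ω → A) (Y : Ω → B) : ℝ :=
  entropy μ X + entropy μ Y - entropy μ (fun ω => (X ω, Y ω))

/-- Conditional mutual information `I(X;Y|Z) = H(X|Z) - H(X|Y,Z)` (in bits). -/
noncomputable def condMutualInfo {Ω : Type*} [Fintype Ω] (μ : Ω → ℝ) {A B C : Type*}
    [Fintype A] [Fintype B] [Fintype C] (X : Ω → A) (Y : Ω → B) (Z : Ω → C) : ℝ :=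
  condEntropy μ X Z - condEntropy μ X (fun ω => (Y ω, Z ω))

/-- `X` and `Z` are conditionally independent given `Y` (the Markov chain `X — Y — Z`). -/
def CondIndep {Ω : Type*} [Fintype Ω] (μ : Ω → ℝ) {A B C : Type*}
    (X : Ω → A) (Z : Ω → C) (Y : Ω → B) : Prop :=
  ∀ a c b, prob μ (fun ω => (X ω, Z ω, Y ω)) (a, c, b) * prob μ Y b
    = prob μ (fun ω => (X ω, Y ω)) (a, b) * prob μ (fun ω => (Z ω, Y ω)) (c, b)

/-- Empirical frequency (type) of the symbol `a'` in the sequence `a`. -/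
noncomputable def empFreq {n : ℕ} {A : Type*} (a : Fin n → A) (a' : A) : ℝ :=
  ((Finset.univ.filter (fun i => a i = a')).card : ℝ) / n

/-- `a` is `δ`-typical for the pmf `p` (relative-deviation definition). -/
def Typical {n : ℕ} {A : Type*} (p : A → ℝ) (δ : ℝ) (a : Fin n → A) : Prop :=
  ∀ a', |empFreq a a' - p a'| ≤ δ * p a'

/-- `(a, b)` is `δ`-jointly typical for the joint pmf `p` on `A × B`. -/
def JointTypical {n : ℕ} {A B : Type*} (p : A × B → ℝ) (δ : ℝ)
    (a : Fin n → A) (b : Fin n → B) : Prop :=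
  ∀ a' b', |empFreq (fun i => (a i, b i)) (a', b') - p (a', b')| ≤ δ * p (a', b')

/-- Entropy (in bits) of a pmf on a finite type. -/
noncomputable def pmfEntropy {T : Type*} [Fintype T] (p : T → ℝ) : ℝ :=
  ∑ t, negMulLog2 (p t)

/-- `A`-marginal of a joint pmf on `A × B`. -/
noncomputable def margA {A B : Type*} [Fintype B] (p : A × B → ℝ) (a : A) : ℝ := ∑ b, p (a, b)

/-- `B`-marginal of a joint pmf on `A × B`. -/
noncomputable def margB {A B : Type*} [Fintype A] (p : A × B → ℝ) (b : B) : ℝ := ∑ a, p (a, b)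

/-- Conditional entropy `H(B|A)` (in bits) of a joint pmf on `A × B`. -/
noncomputable def pmfCondEntropyBA {A B : Type*} [Fintype A] [Fintype B] (p : A × B → ℝ) : ℝ :=
  pmfEntropy p - pmfEntropy (margA p)

/-- Mutual information `I(A;B)` (in bits) of a joint pmf on `A × B`. -/
noncomputable def pmfMutualInfo {A B : Type*} [Fintype A] [Fintype B] (p : A × B → ℝ) : ℝ :=
  pmfEntropy (margA p) + pmfEntropy (margB p) - pmfEntropy p

section Aux

lemma two_rpow_sum {T : Type*} (s : Finset T) (e : T → ℝ) :
    (∏ t ∈ s, (2:ℝ) ^ (e t)) = (2:ℝ) ^ (∑ t ∈ s, e t) := by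
  classical
  induction s using Finset.cons_induction with
  | empty => simp
  | cons t s ht ih =>
    rw [Finset.prod_cons, Finset.sum_cons, ih, ← Real.rpow_add (by norm_num)]

lemma prod_pow_eq_two_rpow {T : Type*} [Fintype T] (f : T → ℝ) (N : T → ℕ)
    (hf : ∀ t, 0 ≤ f t) (h0 : ∀ t, f t = 0 → N t = 0) :
    (∏ t, f t ^ N t) = (2:ℝ) ^ (∑ t, (N t : ℝ) * Real.logb 2 (f t)) := by
  rw [← two_rpow_sum]
  refine Finset.prod_congr rfl fun t _ => ?_
  rcases eq_or_lt_of_le (hf t) with h | h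
  · rw [← h, h0 t h.symm]; simp
  · rw [mul_comm, Real.rpow_mul (by norm_num), Real.rpow_logb (by norm_num) (by norm_num) h,
      Real.rpow_natCast]

lemma prod_comp_eq_prod_pow {n : ℕ} {T : Type*} [Fintype T] (f : T → ℝ) (b : Fin n → T) :
    (∏ i, f (b i)) = ∏ t, f t ^ (Finset.univ.filter (fun i => b i = t)).card := by
  rw [← Finset.prod_fiberwise' Finset.univ b f]
  exact Finset.prod_congr rfl fun t _ => by rw [Finset.prod_const]

section

lemma pmfEntropy_eq {T : Type*} [Fintype T] (p : T → ℝ) :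
    pmfEntropy p = -∑ t, p t * Real.logb 2 (p t) := by
  simp [pmfEntropy, negMulLog2, neg_mul, Finset.sum_neg_distrib]

variable {A B : Type*} [Fintype A] [Fintype B]

lemma sum_joint_fst (p : A × B → ℝ) (f : A → ℝ) :
    ∑ ab : A × B, p ab * f ab.1 = ∑ a, margA p a * f a := by
  rw [Fintype.sum_prod_type]
  exact Finset.sum_congr rfl fun a _ => by rw [margA, Finset.sum_mul]

lemma sum_joint_snd (p : A × B → ℝ) (f : B → ℝ) :
    ∑ ab : A × B, p ab * f ab.2 = ∑ b, margB p b * f b := by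
  rw [Fintype.sum_prod_type_right]
  exact Finset.sum_congr rfl fun b _ => by rw [margB, Finset.sum_mul]

lemma margA_nonneg (p : A × B → ℝ) (hp : IsPMF p) (a : A) : 0 ≤ margA p a :=
  Finset.sum_nonneg fun b _ => hp.1 _

lemma margB_nonneg (p : A × B → ℝ) (hp : IsPMF p) (b : B) : 0 ≤ margB p b :=
  Finset.sum_nonneg fun a _ => hp.1 _

lemma le_margA (p : A × B → ℝ) (hp : IsPMF p) (ab : A × B) : p ab ≤ margA p ab.1 := by
  have := Finset.single_le_sum (f := fun b => p (ab.1, b)) (fun b _ => hp.1 _)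
    (Finset.mem_univ ab.2)
  simpa [margA] using this

lemma le_margB (p : A × B → ℝ) (hp : IsPMF p) (ab : A × B) : p ab ≤ margB p ab.2 := by
  have := Finset.single_le_sum (f := fun a => p (a, ab.2)) (fun a _ => hp.1 _)
    (Finset.mem_univ ab.1)
  simpa [margB] using this

lemma margA_sum (p : A × B → ℝ) (hp : IsPMF p) : ∑ a, margA p a = 1 := by
  rw [← hp.2, Fintype.sum_prod_type]; rfl

lemma margB_sum (p : A × B → ℝ) (hp : IsPMF p) : ∑ b, margB p b = 1 := by
  rw [← hp.2, Fintype.sum_prod_type_right]; rfl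

lemma sum_p_logb_condBA (p : A × B → ℝ) (hp : IsPMF p) :
    ∑ ab : A × B, p ab * Real.logb 2 (p ab / margA p ab.1)
      = pmfEntropy (margA p) - pmfEntropy p := by
  have h : ∀ ab : A × B, p ab * Real.logb 2 (p ab / margA p ab.1)
      = p ab * Real.logb 2 (p ab) - p ab * Real.logb 2 (margA p ab.1) := by
    intro ab
    rcases eq_or_lt_of_le (hp.1 ab) with h | h
    · simp [← h]
    · have hA : 0 < margA p ab.1 := lt_of_lt_of_le h (le_margA p hp ab)
      rw [Real.logb_div (ne_of_gt h) (ne_of_gt hA), mul_sub]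
  rw [Finset.sum_congr rfl fun ab _ => h ab, Finset.sum_sub_distrib,
    sum_joint_fst p (fun a => Real.logb 2 (margA p a)), pmfEntropy_eq, pmfEntropy_eq]
  ring

lemma entropy_subadd (p : A × B → ℝ) (hp : IsPMF p) :
    pmfEntropy p ≤ pmfEntropy (margA p) + pmfEntropy (margB p) := by
  set D := ∑ ab : A × B, p ab * Real.logb 2 ((margA p ab.1 * margB p ab.2) / p ab) with hD
  have hDeq : D = pmfEntropy p - pmfEntropy (margA p) - pmfEntropy (margB p) := by
    have h : ∀ ab : A × B, p ab * Real.logb 2 ((margA p ab.1 * margB p ab.2) / p ab)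
        = p ab * Real.logb 2 (margA p ab.1) + p ab * Real.logb 2 (margB p ab.2)
          - p ab * Real.logb 2 (p ab) := by
      intro ab
      rcases eq_or_lt_of_le (hp.1 ab) with h | h
      · simp [← h]
      · have hA : 0 < margA p ab.1 := lt_of_lt_of_le h (le_margA p hp ab)
        have hB : 0 < margB p ab.2 := lt_of_lt_of_le h (le_margB p hp ab)
        rw [Real.logb_div (ne_of_gt (mul_pos hA hB)) (ne_of_gt h),
          Real.logb_mul (ne_of_gt hA) (ne_of_gt hB)]
        ring
    rw [hD, Finset.sum_congr rfl fun ab _ => h ab]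
    rw [Finset.sum_sub_distrib, Finset.sum_add_distrib,
      sum_joint_fst p (fun a => Real.logb 2 (margA p a)),
      sum_joint_snd p (fun b => Real.logb 2 (margB p b)),
      pmfEntropy_eq, pmfEntropy_eq, pmfEntropy_eq]
    ring
  have hDle : D ≤ 0 := by
    have hterm : ∀ ab : A × B, p ab * Real.logb 2 ((margA p ab.1 * margB p ab.2) / p ab)
        ≤ (margA p ab.1 * margB p ab.2 - p ab) / Real.log 2 := by
      intro ab
      rcases eq_or_lt_of_le (hp.1 ab) with h | h
      · rw [← h]
        simp only [zero_mul, sub_zero]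
        exact div_nonneg (mul_nonneg (margA_nonneg p hp _) (margB_nonneg p hp _))
          (Real.log_nonneg one_le_two)
      · have hA : 0 < margA p ab.1 := lt_of_lt_of_le h (le_margA p hp ab)
        have hB : 0 < margB p ab.2 := lt_of_lt_of_le h (le_margB p hp ab)
        have hx : 0 < (margA p ab.1 * margB p ab.2) / p ab := div_pos (mul_pos hA hB) h
        have hlog := Real.log_le_sub_one_of_pos hx
        have h2 : (0:ℝ) < Real.log 2 := Real.log_pos (by norm_num)
        rw [Real.logb, ← mul_div_assoc, div_le_div_iff_of_pos_right h2]
        calc p ab * Real.log ((margA p ab.1 * margB p ab.2) / p ab)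
            ≤ p ab * ((margA p ab.1 * margB p ab.2) / p ab - 1) :=
              mul_le_mul_of_nonneg_left hlog h.le
          _ = margA p ab.1 * margB p ab.2 - p ab := by
              field_simp
    calc D ≤ ∑ ab : A × B, (margA p ab.1 * margB p ab.2 - p ab) / Real.log 2 :=
          Finset.sum_le_sum fun ab _ => hterm ab
      _ = ((∑ ab : A × B, margA p ab.1 * margB p ab.2) - 1) / Real.log 2 := by
          rw [← Finset.sum_div, Finset.sum_sub_distrib, hp.2]
      _ = ((∑ a, margA p a) * (∑ b, margB p b) - 1) / Real.log 2 := by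
          rw [Fintype.sum_prod_type, ← Finset.sum_mul_sum]
      _ = 0 := by rw [margA_sum p hp, margB_sum p hp]; norm_num
  linarith

end
lemma empFreq_nonneg {n : ℕ} {T : Type*} (b : Fin n → T) (t : T) : 0 ≤ empFreq b t :=
  div_nonneg (Nat.cast_nonneg _) (Nat.cast_nonneg _)

lemma empFreq_card {n : ℕ} {T : Type*} [Fintype T] (b : Fin n → T) (t : T) :
    (((Finset.univ.filter (fun i => b i = t)).card : ℝ)) = (n:ℝ) * empFreq b t := by
  rcases Nat.eq_zero_or_pos n with hn | hn
  · subst hn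
    have h : (Finset.univ.filter (fun i => b i = t)).card = 0 :=
      Nat.le_zero.mp (le_trans (Finset.card_filter_le _ _) (by simp))
    rw [h]; simp
  · have hnR : (0:ℝ) < n := by exact_mod_cast hn
    have hne : (n:ℝ) ≠ 0 := ne_of_gt hnR
    simp only [empFreq]
    field_simp

lemma prod_comp_eq_two_rpow {n : ℕ} {T : Type*} [Fintype T] (f : T → ℝ) (b : Fin n → T)
    (hf : ∀ t, 0 ≤ f t) (h0 : ∀ t, f t = 0 → empFreq b t = 0) :
    (∏ i, f (b i)) = (2:ℝ) ^ ((n:ℝ) * ∑ t, empFreq b t * Real.logb 2 (f t)) := by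
  have h0' : ∀ t, f t = 0 → (Finset.univ.filter (fun i => b i = t)).card = 0 := by
    intro t ht
    have := empFreq_card b t
    rw [h0 t ht, mul_zero] at this
    exact_mod_cast this
  rw [prod_comp_eq_prod_pow f b,
    prod_pow_eq_two_rpow f (fun t => (Finset.univ.filter (fun i => b i = t)).card) hf h0']
  congr 1
  rw [Finset.mul_sum]
  exact Finset.sum_congr rfl fun t _ => by rw [empFreq_card b t, mul_assoc]

lemma empFreq_marg {n : ℕ} {A B : Type*} [Fintype A] [Fintype B]
    (a : Fin n → A) (b : Fin n → B) (b' : B) :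
    empFreq b b' = ∑ a', empFreq (fun i => (a i, b i)) (a', b') := by
  have h1 : (Finset.univ.filter (fun i => b i = b')).card
      = ∑ a', ((Finset.univ.filter (fun i => b i = b')).filter (fun i => a i = a')).card :=
    Finset.card_eq_sum_card_fiberwise (f := a) (fun x _ => Finset.mem_univ (a x))
  have h2 : ∀ a', (Finset.univ.filter (fun i => b i = b')).filter (fun i => a i = a')
      = Finset.univ.filter (fun i => (a i, b i) = (a', b')) := by
    intro a'
    ext i
    simp [Finset.mem_filter, Prod.ext_iff, and_comm]
  simp only [empFreq, ← Finset.sum_div]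
  rw [h1]
  push_cast
  refine congrArg (· / (n:ℝ)) ?_
  refine Finset.sum_congr rfl fun a' _ => ?_
  rw [h2 a']

end Aux

/-- Probability bound for conditionally typical sets under an independent draw: if `a` is
`δ1`-typical for `p_A` and `B` is drawn i.i.d. from the marginal `p_B`, then
`P[(a,B) δ2-jointly typical] ≤ 2^{-n(I(A;B) - 2 δ2 H(B))}`. -/
theorem stmt8 {A B : Type*} [Fintype A] [Fintype B] (p : A × B → ℝ) (hp : IsPMF p)
    (δ1 δ2 : ℝ) (h0 : 0 ≤ δ1) (h12 : δ1 < δ2)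
    (hmin : ∀ ab : A × B, 0 < p ab → δ2 ≤ p ab)
    (n : ℕ) (a : Fin n → A) (ha : Typical (margA p) δ1 a) :
    (∑ b : Fin n → B, (∏ i, margB p (b i)) * (if JointTypical p δ2 a b then 1 else 0))
      ≤ (2 : ℝ) ^ (-(n : ℝ) * (pmfMutualInfo p - 2 * δ2 * pmfEntropy (margB p))) := by
  classical
  have hp0 := hp.1
  have hδ2 : 0 < δ2 := lt_of_le_of_lt h0 h12
  have hn0 : (0:ℝ) ≤ (n:ℝ) := Nat.cast_nonneg n
  set q : B → ℝ := margB p with hqdef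
  set pA : A → ℝ := margA p with hpAdef
  have hq0 : ∀ b', 0 ≤ q b' := margB_nonneg p hp
  have hq1 : ∑ b', q b' = 1 := margB_sum p hp
  have hqle1 : ∀ b', q b' ≤ 1 := by
    intro b'
    rw [← hq1]
    exact Finset.single_le_sum (fun x _ => hq0 x) (Finset.mem_univ b')
  -- positivity of pA along a
  have hpApos : ∀ i : Fin n, 0 < pA (a i) := by
    intro i
    rcases (margA_nonneg p hp (a i)).lt_or_eq with h | h
    · exact h
    · exfalso
      have h1 := ha (a i)
      have h' : pA (a i) = 0 := h.symm
      rw [h', mul_zero, sub_zero, abs_le] at h1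
      have hn : (0:ℝ) < n := by exact_mod_cast i.pos
      have hcard : 0 < ((Finset.univ.filter (fun j => a j = a i)).card : ℝ) := by
        have hi : i ∈ Finset.univ.filter (fun j => a j = a i) := by simp
        exact_mod_cast Finset.card_pos.mpr ⟨i, hi⟩
      have hemp : 0 < empFreq a (a i) := div_pos hcard hn
      linarith [h1.2]
  -- conditional pmf r
  set r : A × B → ℝ := fun ab => p ab / pA ab.1 with hrdef
  have hr0 : ∀ ab, 0 ≤ r ab := fun ab => div_nonneg (hp0 ab) (margA_nonneg p hp ab.1)
  have hrle1 : ∀ ab, r ab ≤ 1 := by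
    intro ab
    rcases (margA_nonneg p hp ab.1).lt_or_eq with h | h
    · exact div_le_one_of_le₀ (le_margA p hp ab) h.le
    · show p ab / pA ab.1 ≤ 1
      have h' : pA ab.1 = 0 := h.symm
      rw [h', div_zero]; norm_num
  have hrzero : ∀ ab, r ab = 0 → p ab = 0 := by
    intro ab hr
    by_contra hne
    have hpp : 0 < p ab := lt_of_le_of_ne (hp0 ab) (Ne.symm hne)
    have hA : 0 < pA ab.1 := lt_of_lt_of_le hpp (le_margA p hp ab)
    have : 0 < r ab := div_pos hpp hA
    linarith
  have hsum_r : ∀ i : Fin n, ∑ b', r (a i, b') = 1 := by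
    intro i
    show (∑ b', p (a i, b') / pA (a i)) = 1
    rw [← Finset.sum_div]
    exact div_self (ne_of_gt (hpApos i))
  -- entropy sums
  set Sq : ℝ := ∑ b', q b' * Real.logb 2 (q b') with hSq
  set Sr : ℝ := ∑ ab : A × B, p ab * Real.logb 2 (r ab) with hSr
  have hSqH : Sq = -pmfEntropy q := by rw [hSq, pmfEntropy_eq]; ring
  have hSrH : Sr = pmfEntropy pA - pmfEntropy p := sum_p_logb_condBA p hp
  -- per-sequence bounds
  have bound1 : ∀ b : Fin n → B, JointTypical p δ2 a b →
      (∏ i, q (b i)) ≤ (2:ℝ) ^ ((1 - δ2) * (n:ℝ) * Sq) := by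
    intro b hb
    have hfreq : ∀ b', |empFreq b b' - q b'| ≤ δ2 * q b' := by
      intro b'
      rw [empFreq_marg a b b']
      have he : (∑ a', empFreq (fun i => (a i, b i)) (a', b')) - q b'
          = ∑ a', (empFreq (fun i => (a i, b i)) (a', b') - p (a', b')) := by
        rw [Finset.sum_sub_distrib]
        congr 1
      rw [he]
      calc |∑ a', (empFreq (fun i => (a i, b i)) (a', b') - p (a', b'))|
          ≤ ∑ a', |empFreq (fun i => (a i, b i)) (a', b') - p (a', b')| :=
            Finset.abs_sum_le_sum_abs _ _
        _ ≤ ∑ a', δ2 * p (a', b') := Finset.sum_le_sum fun a' _ => hb a' b'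
        _ = δ2 * q b' := by rw [← Finset.mul_sum]; rfl
    have hlo : ∀ b', (1 - δ2) * q b' ≤ empFreq b b' := by
      intro b'
      have := (abs_le.mp (hfreq b')).1
      nlinarith [hq0 b']
    have hz : ∀ b', q b' = 0 → empFreq b b' = 0 := by
      intro b' hqz
      have := hfreq b'
      rw [hqz, mul_zero, sub_zero] at this
      exact abs_nonpos_iff.mp this ▸ rfl
    rw [prod_comp_eq_two_rpow q b hq0 hz,
      Real.rpow_le_rpow_left_iff (by norm_num : (1:ℝ) < 2)]
    have hstep : (∑ t, empFreq b t * Real.logb 2 (q t)) ≤ (1 - δ2) * Sq := by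
      rw [hSq, Finset.mul_sum]
      refine Finset.sum_le_sum fun t _ => ?_
      rw [← mul_assoc]
      exact mul_le_mul_of_nonpos_right (hlo t)
        (Real.logb_nonpos (by norm_num) (hq0 t) (hqle1 t))
    calc (n:ℝ) * ∑ t, empFreq b t * Real.logb 2 (q t)
        ≤ (n:ℝ) * ((1 - δ2) * Sq) := mul_le_mul_of_nonneg_left hstep hn0
      _ = (1 - δ2) * (n:ℝ) * Sq := by ring
  have bound2 : ∀ b : Fin n → B, JointTypical p δ2 a b →
      (2:ℝ) ^ ((1 + δ2) * (n:ℝ) * Sr) ≤ ∏ i, r (a i, b i) := by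
    intro b hb
    have hfreq : ∀ ab : A × B, |empFreq (fun i => (a i, b i)) ab - p ab| ≤ δ2 * p ab := by
      intro ab
      have := hb ab.1 ab.2
      rwa [Prod.mk.eta] at this
    have hhi : ∀ ab, empFreq (fun i => (a i, b i)) ab ≤ (1 + δ2) * p ab := by
      intro ab
      have := (abs_le.mp (hfreq ab)).2
      linarith
    have hz : ∀ ab, r ab = 0 → empFreq (fun i => (a i, b i)) ab = 0 := by
      intro ab hrz
      have hpz := hrzero ab hrz
      have := hfreq ab
      rw [hpz, mul_zero, sub_zero] at this
      exact abs_nonpos_iff.mp this ▸ rfl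
    rw [prod_comp_eq_two_rpow r (fun i => (a i, b i)) hr0 hz,
      Real.rpow_le_rpow_left_iff (by norm_num : (1:ℝ) < 2)]
    have hstep : (1 + δ2) * Sr ≤ ∑ ab : A × B, empFreq (fun i => (a i, b i)) ab
        * Real.logb 2 (r ab) := by
      rw [hSr, Finset.mul_sum]
      refine Finset.sum_le_sum fun ab _ => ?_
      rw [← mul_assoc]
      exact mul_le_mul_of_nonpos_right (hhi ab)
        (Real.logb_nonpos (by norm_num) (hr0 ab) (hrle1 ab))
    calc (1 + δ2) * (n:ℝ) * Sr = (n:ℝ) * ((1 + δ2) * Sr) := by ring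
      _ ≤ (n:ℝ) * ∑ ab : A × B, empFreq (fun i => (a i, b i)) ab * Real.logb 2 (r ab) :=
          mul_le_mul_of_nonneg_left hstep hn0
  -- rewrite LHS as a filtered sum
  have hLHS : (∑ b : Fin n → B, (∏ i, q (b i)) * (if JointTypical p δ2 a b then 1 else 0))
      = ∑ b ∈ Finset.univ.filter (fun b => JointTypical p δ2 a b), ∏ i, q (b i) := by
    rw [Finset.sum_filter]
    exact Finset.sum_congr rfl fun b _ => by
      by_cases h : JointTypical p δ2 a b <;> simp [h]
  rw [hLHS]
  -- main chain
  set e1 : ℝ := (1 - δ2) * (n:ℝ) * Sq with he1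
  set e2 : ℝ := (1 + δ2) * (n:ℝ) * Sr with he2
  have hchain : ∀ b ∈ Finset.univ.filter (fun b => JointTypical p δ2 a b),
      (∏ i, q (b i)) ≤ (2:ℝ) ^ (e1 - e2) * ∏ i, r (a i, b i) := by
    intro b hbmem
    have hb := (Finset.mem_filter.mp hbmem).2
    calc (∏ i, q (b i)) ≤ (2:ℝ) ^ e1 := bound1 b hb
      _ = (2:ℝ) ^ (e1 - e2) * (2:ℝ) ^ e2 := by
          rw [← Real.rpow_add (by norm_num)]; ring_nf
      _ ≤ (2:ℝ) ^ (e1 - e2) * ∏ i, r (a i, b i) := by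
          exact mul_le_mul_of_nonneg_left (bound2 b hb) (Real.rpow_nonneg (by norm_num) _)
  have hsum_all : (∑ b : Fin n → B, ∏ i, r (a i, b i)) = 1 := by
    rw [← Fintype.prod_sum (fun i b' => r (a i, b'))]
    rw [Finset.prod_congr rfl fun i _ => hsum_r i]
    exact Finset.prod_const_one
  calc (∑ b ∈ Finset.univ.filter (fun b => JointTypical p δ2 a b), ∏ i, q (b i))
      ≤ ∑ b ∈ Finset.univ.filter (fun b => JointTypical p δ2 a b),
          (2:ℝ) ^ (e1 - e2) * ∏ i, r (a i, b i) := Finset.sum_le_sum hchain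
    _ = (2:ℝ) ^ (e1 - e2) * ∑ b ∈ Finset.univ.filter (fun b => JointTypical p δ2 a b),
          ∏ i, r (a i, b i) := by rw [Finset.mul_sum]
    _ ≤ (2:ℝ) ^ (e1 - e2) * ∑ b : Fin n → B, ∏ i, r (a i, b i) := by
        refine mul_le_mul_of_nonneg_left ?_ (Real.rpow_nonneg (by norm_num) _)
        exact Finset.sum_le_sum_of_subset_of_nonneg (Finset.filter_subset _ _)
          (fun b _ _ => Finset.prod_nonneg fun i _ => hr0 _)
    _ = (2:ℝ) ^ (e1 - e2) := by rw [hsum_all, mul_one]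
    _ ≤ (2 : ℝ) ^ (-(n : ℝ) * (pmfMutualInfo p - 2 * δ2 * pmfEntropy (margB p))) := by
        rw [Real.rpow_le_rpow_left_iff (by norm_num : (1:ℝ) < 2)]
        have hsub := entropy_subadd p hp
        have hI : 0 ≤ pmfEntropy pA + pmfEntropy q - pmfEntropy p := by
          rw [hpAdef, hqdef]; linarith
        rw [he1, he2, hSqH, hSrH]
        have hexp : -(n : ℝ) * (pmfMutualInfo p - 2 * δ2 * pmfEntropy (margB p))
            - ((1 - δ2) * (n:ℝ) * (-pmfEntropy q)
              - (1 + δ2) * (n:ℝ) * (pmfEntropy pA - pmfEntropy p))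
            = (n:ℝ) * δ2 * (pmfEntropy pA + pmfEntropy q - pmfEntropy p) := by
          rw [pmfMutualInfo, ← hpAdef, ← hqdef]
          ring
        nlinarith [mul_nonneg (mul_nonneg hn0 hδ2.le) hI]
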